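/- Consider the self-supervised classifier f_ss(X) = sign(−Z + b) with Z = k₁‖X‖₂² + k₂, under the model X|Y=+1 ∼ N(0,σ₁²I_d), X|Y=−1 ∼ N(0,βσ₁²I_d), β > 3, with intercept b = (1/2)[(1/N₊)∑_{Y_i=+1}Z_i + (1/N₋)∑_{Y_i=−1}Z_i] from N₊ positive and N₋ negative training samples. Then for any δ ∈ (0, (β−1)/(β+1)), with probability at least 1 − 2exp(−N₋dδ²/8) − 2exp(−N₊dδ²/8) over the training data: err_{f_ss} ≤ p₊·exp(−d(β−1−(1+β)δ)²/32) + p₋·exp(−d(β−1−(1+β)δ)²/(32β²)) if δ ∈ [(β−3)/(β+1), (β−1)/(β+1)); and err_{f_ss} ≤ p₊·exp(−d(β−1−(1+β)δ)/16) + p₋·exp(−d(β−1−(1+β)δ)²/(32β²)) if δ ∈ (0, (β−3)/(β+1)). -/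

import Mathlib

open MeasureTheory ProbabilityTheory Real
open scoped ENNReal NNReal

/-- The chi-squared distribution with `d` degrees of freedom, realized as the law of the
sum of `d` squared i.i.d. standard normals. -/
noncomputable def chiSq (d : ℕ) : Measure ℝ :=
  Measure.map (fun w : Fin d → ℝ => ∑ i, (w i) ^ 2)
    (Measure.pi fun _ : Fin d => gaussianReal 0 1)

/-- Error probability of the self-supervised classifier `f_ss(X) = sign(-Z + b)` where the
self-supervised feature satisfies `(Z - k₂)/(k₁σ₁²) ~ χ²_d` given `Y = +1` and
`(Z - k₂)/(k₁βσ₁²) ~ χ²_d` given `Y = -1`, with class priors `pPos` and `1 - pPos`: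
the classifier errs on the positive class when `Z ≥ b` and on the negative class when
`Z < b`. -/
noncomputable def errSS (d : ℕ) (k₁ k₂ σ₁ β pPos b : ℝ) : ℝ :=
  pPos * ((chiSq d) {x | k₁ * σ₁ ^ 2 * x + k₂ ≥ b}).toReal
    + (1 - pPos) * ((chiSq d) {x | k₁ * β * σ₁ ^ 2 * x + k₂ < b}).toReal

lemma gauss_int_exp_sq {s : ℝ} (hs : s < 1/2) :
    Integrable (fun x => rexp (s * x^2)) (gaussianReal 0 1) ∧
    ∫ x, rexp (s * x^2) ∂(gaussianReal 0 1) = (Real.sqrt (1 - 2*s))⁻¹ := by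
  have h1 : (gaussianReal 0 1 : Measure ℝ) = volume.withDensity (gaussianPDF 0 1) :=
    gaussianReal_of_var_ne_zero 0 one_ne_zero
  have hb : (0:ℝ) < 1/2 - s := by linarith
  have hpdf : ∀ x : ℝ, gaussianPDFReal 0 1 x * rexp (s * x^2)
      = (Real.sqrt (2*π))⁻¹ * rexp (-(1/2 - s) * x^2) := by
    intro x
    simp only [gaussianPDFReal, NNReal.coe_one, mul_one, sub_zero]
    rw [mul_assoc, ← Real.exp_add]
    ring_nf
  have hmeaspdf : Measurable (fun x => (gaussianPDFReal 0 1 x).toNNReal) :=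
    (measurable_gaussianPDFReal 0 1).real_toNNReal
  have hwd : (gaussianReal 0 1 : Measure ℝ)
      = volume.withDensity (fun x => ((gaussianPDFReal 0 1 x).toNNReal : ℝ≥0∞)) := by
    rw [h1]; rfl
  have hint : Integrable (fun x => gaussianPDFReal 0 1 x * rexp (s * x^2)) volume := by
    simp only [hpdf]
    exact (integrable_exp_neg_mul_sq hb).const_mul _
  constructor
  · rw [hwd]
    rw [integrable_withDensity_iff_integrable_smul hmeaspdf]
    refine hint.congr (Filter.Eventually.of_forall fun x => ?_)
    simp [NNReal.smul_def, Real.coe_toNNReal _ (gaussianPDFReal_nonneg 0 1 x)]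
  · rw [hwd, integral_withDensity_eq_integral_smul hmeaspdf]
    have : ∀ x : ℝ, (gaussianPDFReal 0 1 x).toNNReal • rexp (s * x^2)
        = (Real.sqrt (2*π))⁻¹ * rexp (-(1/2 - s) * x^2) := fun x => by
      rw [NNReal.smul_def, Real.coe_toNNReal _ (gaussianPDFReal_nonneg 0 1 x), smul_eq_mul,
        hpdf]
    simp only [this]
    rw [MeasureTheory.integral_const_mul, integral_gaussian]
    rw [← Real.sqrt_inv, ← Real.sqrt_mul (by positivity), ← Real.sqrt_inv]
    congr 1
    have hπ := Real.pi_ne_zero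
    have hne : (1:ℝ)/2 - s ≠ 0 := ne_of_gt hb
    rw [div_eq_mul_inv, show ((1:ℝ)/2 - s)⁻¹ = 2 * (1 - 2*s)⁻¹ by
      rw [show (1:ℝ)/2 - s = (1 - 2*s)/2 by ring]; rw [inv_div]; ring]
    have h2s : (1:ℝ) - 2*s ≠ 0 := by intro h; apply hne; linarith [h]
    field_simp

lemma measurable_sumsq (d : ℕ) : Measurable (fun w : Fin d → ℝ => ∑ i, (w i) ^ 2) := by
  apply Finset.measurable_sum
  intro i _
  exact (measurable_pi_apply i).pow_const 2

instance chiSq_prob (d : ℕ) : IsProbabilityMeasure (chiSq d) :=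
  Measure.isProbabilityMeasure_map (measurable_sumsq d).aemeasurable

lemma chiSq_exp_int (d : ℕ) {s : ℝ} (hs : s < 1/2) :
    Integrable (fun x => rexp (s * x)) (chiSq d) ∧
    ∫ x, rexp (s * x) ∂(chiSq d) = ((Real.sqrt (1 - 2*s))⁻¹)^d := by
  letI : MeasureSpace ℝ := ⟨gaussianReal 0 1⟩
  have hvol : (volume : Measure ℝ) = gaussianReal 0 1 := rfl
  have hsf : SigmaFinite (volume : Measure ℝ) := by
    rw [hvol]; infer_instance
  have hpi : (volume : Measure (Fin d → ℝ)) = Measure.pi fun _ : Fin d => gaussianReal 0 1 := by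
    rw [volume_pi]; exact congrArg _ (funext fun _ => hvol)
  have hcomp : ∀ w : Fin d → ℝ, rexp (s * ∑ i, (w i)^2) = ∏ i, rexp (s * (w i)^2) := by
    intro w
    rw [← Real.exp_sum, Finset.mul_sum]
  constructor
  · rw [chiSq, integrable_map_measure
      (Measurable.aestronglyMeasurable (by fun_prop : Measurable fun x : ℝ => rexp (s * x)))
      (measurable_sumsq d).aemeasurable]
    have : Integrable (fun w : Fin d → ℝ => ∏ i, rexp (s * (w i)^2)) volume := by
      apply Integrable.fintype_prod (f := fun (_ : Fin d) (x : ℝ) => rexp (s * x^2))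
      intro i
      rw [hvol]
      exact (gauss_int_exp_sq hs).1
    rw [hpi] at this
    exact this.congr (Filter.Eventually.of_forall fun w => (hcomp w).symm)
  · rw [chiSq, integral_map (measurable_sumsq d).aemeasurable
      (Measurable.aestronglyMeasurable (by fun_prop : Measurable fun x : ℝ => rexp (s * x)))]
    simp only [hcomp]
    rw [MeasureTheory.integral_fintype_prod_eq_pow (fun x : ℝ => rexp (s * x^2)),
      (gauss_int_exp_sq hs).2]
    simp

lemma log_le_half_sub_inv {u : ℝ} (hu : 1 ≤ u) : Real.log u ≤ (u - u⁻¹)/2 := by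
  have hder : ∀ y : ℝ, 1 < y → HasDerivAt (fun y : ℝ => (y - y⁻¹)/2 - Real.log y)
      ((1 - -(y^2)⁻¹)/2 - y⁻¹) y := by
    intro y hy1
    have hy0 : y ≠ 0 := by positivity
    exact (((hasDerivAt_id y).sub (hasDerivAt_inv hy0)).div_const 2).sub
      (Real.hasDerivAt_log hy0)
  have hmono : MonotoneOn (fun y : ℝ => (y - y⁻¹)/2 - Real.log y) (Set.Ici 1) := by
    refine monotoneOn_of_deriv_nonneg (convex_Ici 1) ?_ ?_ ?_
    · apply ContinuousOn.sub
      · exact (continuousOn_id.sub (continuousOn_inv₀.mono (fun y hy =>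
          by simp only [Set.mem_compl_iff, Set.mem_singleton_iff]
             exact ne_of_gt (lt_of_lt_of_le one_pos hy)))).div_const 2
      · exact Real.continuousOn_log.mono (fun y hy =>
          by simp only [Set.mem_compl_iff, Set.mem_singleton_iff]
             exact ne_of_gt (lt_of_lt_of_le one_pos hy))
    · intro y hy
      rw [interior_Ici] at hy
      exact (hder y hy).differentiableAt.differentiableWithinAt
    · intro y hy
      rw [interior_Ici] at hy
      have hy1 : (1:ℝ) < y := hy
      rw [(hder y hy1).deriv]
      have h2 : (0:ℝ) < y^2 := by positivity
      have heq : (1 - -(y^2)⁻¹)/2 - y⁻¹ = (y-1)^2 / (2*y^2) := by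
        field_simp
        ring
      rw [heq]
      positivity
  have h := hmono (Set.mem_Ici.2 le_rfl) (Set.mem_Ici.2 hu) hu
  simp only [inv_one, sub_self, zero_div, Real.log_one, sub_zero, zero_sub] at h
  linarith

lemma inv_sqrt_pow_eq (n : ℕ) {u : ℝ} (hu : 0 < u) :
    ((Real.sqrt u)⁻¹)^n = rexp (-((n:ℝ) * Real.log u)/2) := by
  have h1 : (Real.sqrt u)⁻¹ = rexp (-(Real.log u)/2) := by
    rw [← Real.exp_log (show (0:ℝ) < (Real.sqrt u)⁻¹ by positivity), Real.log_inv,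
      Real.log_sqrt hu.le]
    ring_nf
  rw [h1, ← Real.exp_nat_mul]
  ring_nf

lemma chiSq_tail_gen_upper (d : ℕ) {t c : ℝ} (ht0 : 0 ≤ t) (ht : t < 1/2) :
    ((chiSq d) {x | c ≤ x}).toReal ≤ rexp ((d:ℝ) * (-Real.log (1-2*t)/2 - 0) - t*c) := by
  have hint : Integrable (fun x => rexp (t * id x)) (chiSq d) := (chiSq_exp_int d ht).1
  have h := measure_ge_le_exp_mul_mgf (μ := chiSq d) (X := id) c ht0 hint
  have hmgf : mgf id (chiSq d) t = ((Real.sqrt (1 - 2*t))⁻¹)^d := by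
    rw [mgf]
    exact (chiSq_exp_int d ht).2
  rw [hmgf] at h
  have hu : (0:ℝ) < 1 - 2*t := by linarith
  rw [inv_sqrt_pow_eq d hu] at h
  calc ((chiSq d) {x | c ≤ x}).toReal ≤ rexp (-t*c) * rexp (-((d:ℝ) * Real.log (1-2*t))/2) := h
    _ = rexp ((d:ℝ) * (-Real.log (1-2*t)/2 - 0) - t*c) := by
        rw [← Real.exp_add]; ring_nf

lemma chiSq_tail_gen_lower (d : ℕ) {t c : ℝ} (ht0 : t ≤ 0) :
    ((chiSq d) {x | x ≤ c}).toReal ≤ rexp ((d:ℝ) * (-Real.log (1-2*t)/2 - 0) - t*c) := by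
  have ht : t < 1/2 := lt_of_le_of_lt ht0 (by norm_num)
  have hint : Integrable (fun x => rexp (t * id x)) (chiSq d) := (chiSq_exp_int d ht).1
  have h := measure_le_le_exp_mul_mgf (μ := chiSq d) (X := id) c ht0 hint
  have hmgf : mgf id (chiSq d) t = ((Real.sqrt (1 - 2*t))⁻¹)^d := by
    rw [mgf]
    exact (chiSq_exp_int d ht).2
  rw [hmgf] at h
  have hu : (0:ℝ) < 1 - 2*t := by linarith
  rw [inv_sqrt_pow_eq d hu] at h
  calc ((chiSq d) {x | x ≤ c}).toReal ≤ rexp (-t*c) * rexp (-((d:ℝ) * Real.log (1-2*t))/2) := h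
    _ = rexp ((d:ℝ) * (-Real.log (1-2*t)/2 - 0) - t*c) := by
        rw [← Real.exp_add]; ring_nf


lemma perdof_upper {ε : ℝ} (hε : 0 < ε) (hε1 : ε ≤ 1) :
    -Real.log (1 - 2*(ε/4))/2 - (ε/4)*(1+ε) ≤ -ε^2/8 := by
  set v : ℝ := 1 - 2*(ε/4) with hvdef
  have hv0 : 0 < v := by rw [hvdef]; linarith
  have hv1 : v ≤ 1 := by rw [hvdef]; linarith
  have hlog : -Real.log v ≤ (v⁻¹ - v)/2 := by
    have h := log_le_half_sub_inv (u := v⁻¹) ((one_le_inv_iff₀).2 ⟨hv0, hv1⟩)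
    rw [Real.log_inv, inv_inv] at h
    linarith
  have hkey : (v⁻¹ - v)/2 ≤ ε*(1+ε)/2 - ε^2/4 := by
    have hq : v⁻¹ - v = (1 - v^2)/v := by
      field_simp
    rw [hq]
    rw [div_div, div_le_iff₀ (by positivity)]
    rw [hvdef]
    nlinarith [sq_nonneg ε, mul_pos hε hε]
  linarith

lemma perdof_lower {ε : ℝ} (hε : 0 < ε) (hε1 : ε ≤ 1) :
    -Real.log (1 - 2*(-(ε/4)))/2 + (ε/4)*(1-ε) ≤ -ε^2/8 := by
  set w : ℝ := 1 - 2*(-(ε/4)) with hwdef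
  have hw1 : w = 1 + ε/2 := by rw [hwdef]; ring
  have hw0 : 0 < w := by rw [hw1]; linarith
  have hlog : 1 - w⁻¹ ≤ Real.log w := by
    have h := Real.log_le_sub_one_of_pos (inv_pos.2 hw0)
    rw [Real.log_inv] at h
    linarith
  have hq : w⁻¹ - 1 = -(ε/2)/w := by
    rw [hw1]
    field_simp
    ring
  have hkey : w⁻¹ - 1 ≤ -ε/2 + ε^2/4 := by
    rw [hq, div_le_iff₀ hw0, hw1]
    nlinarith [hε, hε1]
  linarith

lemma chiSq_upper_small (d : ℕ) {ε : ℝ} (hε : 0 < ε) (hε1 : ε ≤ 1) :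
    ((chiSq d) {x | (d:ℝ)*(1+ε) ≤ x}).toReal ≤ rexp (-(d:ℝ)*ε^2/8) := by
  have ht0 : (0:ℝ) ≤ ε/4 := by linarith
  have ht : ε/4 < 1/2 := by linarith
  refine le_trans (chiSq_tail_gen_upper d ht0 ht) (Real.exp_le_exp.2 ?_)
  set v : ℝ := 1 - 2*(ε/4) with hvdef
  have hv0 : 0 < v := by rw [hvdef]; linarith
  have hv1 : v ≤ 1 := by rw [hvdef]; linarith
  have hlog : -Real.log v ≤ (v⁻¹ - v)/2 := by
    have h := log_le_half_sub_inv (u := v⁻¹) ((one_le_inv_iff₀ ).2 ⟨hv0, hv1⟩)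
    rw [Real.log_inv, inv_inv] at h
    linarith
  have hkey : (v⁻¹ - v)/2 ≤ ε*(1+ε)/2 - ε^2/4 := by
    have hq : v⁻¹ - v = (1 - v^2)/v := by
      field_simp
    rw [hq]
    rw [div_div, div_le_iff₀ (by positivity)]
    rw [hvdef]
    nlinarith [sq_nonneg ε, mul_pos hε hε]
  have hperdof : -Real.log v/2 - 0 - (ε/4)*(1+ε) ≤ -ε^2/8 := by linarith
  have hd0 : (0:ℝ) ≤ (d:ℝ) := Nat.cast_nonneg d
  calc (d:ℝ) * (-Real.log (1-2*(ε/4))/2 - 0) - (ε/4)*((d:ℝ)*(1+ε))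
      = (d:ℝ) * (-Real.log v/2 - 0 - (ε/4)*(1+ε)) := by rw [← hvdef]; ring
    _ ≤ (d:ℝ) * (-ε^2/8) := mul_le_mul_of_nonneg_left hperdof hd0
    _ = -(d:ℝ)*ε^2/8 := by ring

lemma chiSq_upper_big (d : ℕ) {ε : ℝ} (hε1 : 1 ≤ ε) :
    ((chiSq d) {x | (d:ℝ)*(1+ε) ≤ x}).toReal ≤ rexp (-(d:ℝ)*ε/8) := by
  have ht0 : (0:ℝ) ≤ 1/4 := by norm_num
  have ht : (1:ℝ)/4 < 1/2 := by norm_num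
  refine le_trans (chiSq_tail_gen_upper d ht0 ht) (Real.exp_le_exp.2 ?_)
  have hv : (1:ℝ) - 2*(1/4) = 1/2 := by norm_num
  have hlog : -Real.log (1/2 : ℝ) ≤ 3/4 := by
    have h := log_le_half_sub_inv (u := (2:ℝ)) (by norm_num)
    rw [show ((2:ℝ) - 2⁻¹)/2 = 3/4 by norm_num] at h
    rw [show Real.log ((1:ℝ)/2) = -Real.log 2 by
      rw [one_div, Real.log_inv]]
    linarith
  have hperdof : -Real.log ((1:ℝ)/2)/2 - 0 - (1/4)*(1+ε) ≤ -ε/8 := by linarith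
  have hd0 : (0:ℝ) ≤ (d:ℝ) := Nat.cast_nonneg d
  calc (d:ℝ) * (-Real.log (1-2*(1/4:ℝ))/2 - 0) - (1/4)*((d:ℝ)*(1+ε))
      = (d:ℝ) * (-Real.log ((1:ℝ)/2)/2 - 0 - (1/4)*(1+ε)) := by rw [hv]; ring
    _ ≤ (d:ℝ) * (-ε/8) := mul_le_mul_of_nonneg_left hperdof hd0
    _ = -(d:ℝ)*ε/8 := by ring

lemma chiSq_lower (d : ℕ) {ε : ℝ} (hε : 0 < ε) (hε1 : ε ≤ 1) :
    ((chiSq d) {x | x ≤ (d:ℝ)*(1-ε)}).toReal ≤ rexp (-(d:ℝ)*ε^2/8) := by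
  have ht0 : -(ε/4) ≤ (0:ℝ) := by linarith
  refine le_trans (chiSq_tail_gen_lower d ht0) (Real.exp_le_exp.2 ?_)
  set w : ℝ := 1 - 2*(-(ε/4)) with hwdef
  have hw1 : w = 1 + ε/2 := by rw [hwdef]; ring
  have hw0 : 0 < w := by rw [hw1]; linarith
  have hlog : 1 - w⁻¹ ≤ Real.log w := by
    have h := Real.log_le_sub_one_of_pos (inv_pos.2 hw0)
    rw [Real.log_inv] at h
    linarith
  have hq : w⁻¹ - 1 = -(ε/2)/w := by
    rw [hw1]
    field_simp
    ring
  have hkey : w⁻¹ - 1 ≤ -ε/2 + ε^2/4 := by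
    rw [hq, div_le_iff₀ hw0, hw1]
    nlinarith [hε, hε1]
  have hperdof : -Real.log w/2 - 0 - (-(ε/4))*(1-ε) ≤ -ε^2/8 := by linarith
  have hd0 : (0:ℝ) ≤ (d:ℝ) := Nat.cast_nonneg d
  calc (d:ℝ) * (-Real.log (1-2*(-(ε/4)))/2 - 0) - (-(ε/4))*((d:ℝ)*(1-ε))
      = (d:ℝ) * (-Real.log w/2 - 0 - (-(ε/4))*(1-ε)) := by rw [← hwdef]; ring
    _ ≤ (d:ℝ) * (-ε^2/8) := mul_le_mul_of_nonneg_left hperdof hd0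
    _ = -(d:ℝ)*ε^2/8 := by ring

section Indep
variable {Ω : Type*} [MeasurableSpace Ω] {μ : Measure Ω}

lemma iIndepFun_precomp {ι ι' : Type*} {f : ι → Ω → ℝ}
    (h : iIndepFun f μ) (g : ι' → ι) (hg : Function.Injective g) :
    iIndepFun (fun j => f (g j)) μ := by
  classical
  rw [iIndepFun_iff_measure_inter_preimage_eq_mul] at h ⊢
  intro S sets hsets
  let sets' : ι → Set ℝ := fun i =>
    if h' : ∃ j, j ∈ S ∧ g j = i then sets h'.choose else Set.univ
  have hgs : ∀ j ∈ S, sets' (g j) = sets j := by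
    intro j hj
    have h' : ∃ j', j' ∈ S ∧ g j' = g j := ⟨j, hj, rfl⟩
    simp only [sets', dif_pos h']
    rw [hg h'.choose_spec.2]
  have hmeas : ∀ i, i ∈ S.image g → MeasurableSet (sets' i) := by
    intro i hi
    obtain ⟨j, hj, rfl⟩ := Finset.mem_image.1 hi
    rw [hgs j hj]
    exact hsets j hj
  have hmain := h (S.image g) hmeas
  have hinter : (⋂ i ∈ S.image g, f i ⁻¹' sets' i) = ⋂ j ∈ S, f (g j) ⁻¹' sets j := by
    ext ω
    simp only [Set.mem_iInter, Set.mem_preimage, Finset.mem_image]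
    constructor
    · intro hh j hj
      have := hh (g j) ⟨j, hj, rfl⟩
      rwa [hgs j hj] at this
    · rintro hh i ⟨j, hj, rfl⟩
      rw [hgs j hj]
      exact hh j hj
  have hprod : ∏ i ∈ S.image g, μ (f i ⁻¹' sets' i) = ∏ j ∈ S, μ (f (g j) ⁻¹' sets j) := by
    rw [Finset.prod_image (fun x _ y _ hxy => hg hxy)]
    apply Finset.prod_congr rfl
    intro j hj
    rw [hgs j hj]
  rw [hinter, hprod] at hmain
  exact hmain

lemma iIndepFun_ae_congr {ι : Type*} {f g : ι → Ω → ℝ}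
    (h : iIndepFun f μ) (hfg : ∀ i, f i =ᵐ[μ] g i) :
    iIndepFun g μ := by
  rw [iIndepFun_iff_measure_inter_preimage_eq_mul] at h ⊢
  intro S sets hsets
  have hset : ∀ i, (g i ⁻¹' sets i : Set Ω) =ᵐ[μ] (f i ⁻¹' sets i) := by
    intro i
    rw [Filter.eventuallyEq_set]
    filter_upwards [hfg i] with ω hω
    simp [Set.mem_preimage, hω]
  have hbig : (⋂ i ∈ S, g i ⁻¹' sets i : Set Ω) =ᵐ[μ] (⋂ i ∈ S, f i ⁻¹' sets i) := by
    rw [Filter.eventuallyEq_set]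
    have hall : ∀ᵐ ω ∂μ, ∀ i ∈ S, f i ω = g i ω :=
      (Filter.eventually_all_finset S).2 (fun i _ => hfg i)
    filter_upwards [hall] with ω hω
    simp only [Set.mem_iInter, Set.mem_preimage]
    constructor <;> intro hh i hi
    · rw [hω i hi]; exact hh i hi
    · rw [← hω i hi]; exact hh i hi
  rw [measure_congr hbig, h S hsets]
  exact Finset.prod_congr rfl (fun i hi => (measure_congr (hset i)).symm)

lemma affine_exp (d : ℕ) {a k₂ : ℝ} (ha : 0 < a) {Z : Ω → ℝ}
    (hZ : Measure.map (fun ω => (Z ω - k₂)/a) μ = chiSq d) {t : ℝ} (ht : a*t < 1/2) :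
    Integrable (fun ω => rexp (t * Z ω)) μ ∧
    ∫ ω, rexp (t * Z ω) ∂μ = rexp (t*k₂) * ((Real.sqrt (1 - 2*(a*t)))⁻¹)^d := by
  have hae : AEMeasurable (fun ω => (Z ω - k₂)/a) μ := by
    by_contra hc
    rw [Measure.map_of_not_aemeasurable hc] at hZ
    exact (IsProbabilityMeasure.ne_zero (chiSq d)) hZ.symm
  have key : (fun ω => rexp (t * Z ω))
      = fun ω => rexp (t*k₂) * rexp ((a*t) * ((Z ω - k₂)/a)) := by
    funext ω
    rw [← Real.exp_add]
    congr 1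
    field_simp
    ring
  have hsm : AEStronglyMeasurable (fun x : ℝ => rexp (t*k₂) * rexp ((a*t) * x))
      (Measure.map (fun ω => (Z ω - k₂)/a) μ) :=
    Measurable.aestronglyMeasurable (by fun_prop)
  have hintg : Integrable (fun x : ℝ => rexp (t*k₂) * rexp ((a*t) * x)) (chiSq d) :=
    ((chiSq_exp_int d ht).1).const_mul _
  constructor
  · rw [key]
    rw [← hZ] at hintg
    exact (integrable_map_measure hsm hae).1 hintg
  · rw [key, ← integral_map hae hsm, hZ, MeasureTheory.integral_const_mul,
      (chiSq_exp_int d ht).2]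

lemma conc_upper {N d : ℕ} {a k₂ : ℝ} (ha : 0 < a) {W : Fin N → Ω → ℝ}
    (hmeas : ∀ i, Measurable (W i)) (hind : iIndepFun W μ)
    (hlaw : ∀ i, Measure.map (fun ω => (W i ω - k₂)/a) μ = chiSq d)
    {δ : ℝ} (hδ : 0 < δ) (hδ1 : δ ≤ 1) :
    (μ {ω | (N:ℝ)*(k₂ + a*(d:ℝ)*(1+δ)) ≤ ∑ i, W i ω}).toReal
      ≤ rexp (-(N:ℝ)*(d:ℝ)*δ^2/8) := by
  haveI : IsProbabilityMeasure μ := hind.isProbabilityMeasure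
  set t : ℝ := δ/(4*a) with htdef
  have hat : a * t = δ/4 := by rw [htdef]; field_simp
  have hat2 : a * t < 1/2 := by rw [hat]; linarith
  have ht0 : 0 ≤ t := by rw [htdef]; positivity
  set c : ℝ := (N:ℝ)*(k₂ + a*(d:ℝ)*(1+δ)) with hcdef
  have hint : ∀ i, i ∈ Finset.univ → Integrable (fun ω => rexp (t * W i ω)) μ :=
    fun i _ => (affine_exp d ha (hlaw i) hat2).1
  have h := measure_ge_le_exp_mul_mgf (μ := μ) (X := ∑ i, W i) c ht0
    (by
      have := hind.integrable_exp_mul_sum (t := t) hmeas (s := Finset.univ) hint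
      exact this)
  have hmgf : mgf (∑ i, W i) μ t
      = (rexp (t*k₂) * ((Real.sqrt (1 - 2*(a*t)))⁻¹)^d)^N := by
    rw [hind.mgf_sum hmeas Finset.univ]
    rw [Finset.prod_congr rfl (fun i _ => by
      show mgf (W i) μ t = rexp (t*k₂) * ((Real.sqrt (1 - 2*(a*t)))⁻¹)^d
      rw [mgf]
      exact (affine_exp d ha (hlaw i) hat2).2)]
    simp [Finset.prod_const, Finset.card_univ]
  rw [hmgf] at h
  have hsetq : {ω | c ≤ (∑ i, W i) ω} = {ω | c ≤ ∑ i, W i ω} := by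
    ext ω
    simp [Finset.sum_apply]
  rw [hsetq] at h
  refine h.trans ?_
  have hu : (0:ℝ) < 1 - 2*(a*t) := by linarith
  rw [inv_sqrt_pow_eq d hu]
  rw [hat] at hu ⊢
  rw [← Real.exp_add, ← Real.exp_nat_mul, ← Real.exp_add]
  apply Real.exp_le_exp.2
  have hper := perdof_upper hδ hδ1
  have hd0 : (0:ℝ) ≤ (N:ℝ)*(d:ℝ) := by positivity
  have ha' : a ≠ 0 := ne_of_gt ha
  calc -t*c + (N:ℝ)*(t*k₂ + -((d:ℝ)*Real.log (1-2*(δ/4)))/2)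
      = (N:ℝ)*(d:ℝ)*(-Real.log (1-2*(δ/4))/2 - (δ/4)*(1+δ)) := by
        rw [hcdef, htdef]
        field_simp
        ring
    _ ≤ (N:ℝ)*(d:ℝ)*(-δ^2/8) := mul_le_mul_of_nonneg_left hper hd0
    _ = -(N:ℝ)*(d:ℝ)*δ^2/8 := by ring

lemma conc_lower {N d : ℕ} {a k₂ : ℝ} (ha : 0 < a) {W : Fin N → Ω → ℝ}
    (hmeas : ∀ i, Measurable (W i)) (hind : iIndepFun W μ)
    (hlaw : ∀ i, Measure.map (fun ω => (W i ω - k₂)/a) μ = chiSq d)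
    {δ : ℝ} (hδ : 0 < δ) (hδ1 : δ ≤ 1) :
    (μ {ω | ∑ i, W i ω ≤ (N:ℝ)*(k₂ + a*(d:ℝ)*(1-δ))}).toReal
      ≤ rexp (-(N:ℝ)*(d:ℝ)*δ^2/8) := by
  haveI : IsProbabilityMeasure μ := hind.isProbabilityMeasure
  set t : ℝ := -(δ/(4*a)) with htdef
  have hat : a * t = -(δ/4) := by rw [htdef]; field_simp
  have hat2 : a * t < 1/2 := by rw [hat]; linarith
  have ht0 : t ≤ 0 := by
    rw [htdef]
    simp only [neg_nonpos]
    positivity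
  set c : ℝ := (N:ℝ)*(k₂ + a*(d:ℝ)*(1-δ)) with hcdef
  have hint : ∀ i, i ∈ Finset.univ → Integrable (fun ω => rexp (t * W i ω)) μ :=
    fun i _ => (affine_exp d ha (hlaw i) hat2).1
  have h := measure_le_le_exp_mul_mgf (μ := μ) (X := ∑ i, W i) c ht0
    (hind.integrable_exp_mul_sum (t := t) hmeas (s := Finset.univ) hint)
  have hmgf : mgf (∑ i, W i) μ t
      = (rexp (t*k₂) * ((Real.sqrt (1 - 2*(a*t)))⁻¹)^d)^N := by
    rw [hind.mgf_sum hmeas Finset.univ]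
    rw [Finset.prod_congr rfl (fun i _ => by
      show mgf (W i) μ t = rexp (t*k₂) * ((Real.sqrt (1 - 2*(a*t)))⁻¹)^d
      rw [mgf]
      exact (affine_exp d ha (hlaw i) hat2).2)]
    simp [Finset.prod_const, Finset.card_univ]
  rw [hmgf] at h
  have hsetq : {ω | (∑ i, W i) ω ≤ c} = {ω | ∑ i, W i ω ≤ c} := by
    ext ω
    simp [Finset.sum_apply]
  rw [hsetq] at h
  refine h.trans ?_
  have hu : (0:ℝ) < 1 - 2*(a*t) := by rw [hat]; linarith
  rw [inv_sqrt_pow_eq d hu]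
  rw [hat] at hu ⊢
  rw [← Real.exp_add, ← Real.exp_nat_mul, ← Real.exp_add]
  apply Real.exp_le_exp.2
  have hper := perdof_lower hδ hδ1
  have hd0 : (0:ℝ) ≤ (N:ℝ)*(d:ℝ) := by positivity
  have ha' : a ≠ 0 := ne_of_gt ha
  calc -t*c + (N:ℝ)*(t*k₂ + -((d:ℝ)*Real.log (1-2*(-(δ/4))))/2)
      = (N:ℝ)*(d:ℝ)*(-Real.log (1-2*(-(δ/4)))/2 + (δ/4)*(1-δ)) := by
        rw [hcdef, htdef]
        field_simp
        ring
    _ ≤ (N:ℝ)*(d:ℝ)*(-δ^2/8) := mul_le_mul_of_nonneg_left hper hd0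
    _ = -(N:ℝ)*(d:ℝ)*δ^2/8 := by ring

end Indep

lemma errSS_le_bound (d : ℕ) {k₁ k₂ σ₁ β pPos b : ℝ}
    (hk₁ : 0 < k₁) (hσ : 0 < σ₁) (hβ : 3 < β) (hpPos : 0 ≤ pPos) (hpNeg : 0 ≤ 1 - pPos)
    {δ : ℝ} (hδ : 0 < δ) (hδ' : δ < (β - 1) / (β + 1))
    (hbl : k₂ + (k₁*σ₁^2)*(d:ℝ)*(1+β)*(1-δ)/2 ≤ b)
    (hbu : b ≤ k₂ + (k₁*σ₁^2)*(d:ℝ)*(1+β)*(1+δ)/2) :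
    errSS d k₁ k₂ σ₁ β pPos b
      ≤ (if (β - 3) / (β + 1) ≤ δ then
           pPos * Real.exp (-d * (β - 1 - (1 + β) * δ) ^ 2 / 32)
             + (1 - pPos) * Real.exp (-d * (β - 1 - (1 + β) * δ) ^ 2 / (32 * β ^ 2))
         else
           pPos * Real.exp (-d * (β - 1 - (1 + β) * δ) / 16)
             + (1 - pPos) * Real.exp (-d * (β - 1 - (1 + β) * δ) ^ 2 / (32 * β ^ 2))) := by
  have ha : (0:ℝ) < k₁*σ₁^2 := by positivity
  have hβ1 : (0:ℝ) < β + 1 := by linarith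
  have hβ0 : (0:ℝ) < β := by linarith
  have hδβ : (1+β)*δ < β - 1 := by
    have := (lt_div_iff₀ hβ1).1 hδ'
    linarith
  set ε₀ : ℝ := (β - 1 - (1+β)*δ)/2 with hε₀
  set ε₁ : ℝ := (β - 1 - (1+β)*δ)/(2*β) with hε₁
  have hε₀pos : 0 < ε₀ := by rw [hε₀]; linarith
  have hε₁pos : 0 < ε₁ := by
    rw [hε₁]
    exact div_pos (by linarith) (by positivity)
  have hε₁le : ε₁ ≤ 1 := by
    rw [hε₁, div_le_one (by positivity)]
    nlinarith [mul_pos hβ1 hδ]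
  have hd0 : (0:ℝ) ≤ (d:ℝ) := Nat.cast_nonneg d
  -- positive term inclusion
  have hsub₀ : {x : ℝ | k₁ * σ₁ ^ 2 * x + k₂ ≥ b} ⊆ {x : ℝ | (d:ℝ)*(1+ε₀) ≤ x} := by
    intro x hx
    simp only [Set.mem_setOf_eq, ge_iff_le] at hx ⊢
    have h1 : k₂ + (k₁*σ₁^2)*(d:ℝ)*(1+β)*(1-δ)/2 ≤ k₁ * σ₁ ^ 2 * x + k₂ := le_trans hbl hx
    have h2 : (k₁*σ₁^2) * ((d:ℝ)*(1+ε₀)) ≤ (k₁*σ₁^2) * x := by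
      rw [hε₀]
      nlinarith [h1]
    exact le_of_mul_le_mul_left h2 ha
  have hsub₁ : {x : ℝ | k₁ * β * σ₁ ^ 2 * x + k₂ < b} ⊆ {x : ℝ | x ≤ (d:ℝ)*(1-ε₁)} := by
    intro x hx
    simp only [Set.mem_setOf_eq] at hx ⊢
    have h1 : k₁ * β * σ₁ ^ 2 * x + k₂ < k₂ + (k₁*σ₁^2)*(d:ℝ)*(1+β)*(1+δ)/2 :=
      lt_of_lt_of_le hx hbu
    have h2 : (k₁*σ₁^2*β) * x ≤ (k₁*σ₁^2*β) * ((d:ℝ)*(1-ε₁)) := by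
      have heq : (k₁*σ₁^2*β) * ((d:ℝ)*(1-ε₁)) = (k₁*σ₁^2)*(d:ℝ)*(1+β)*(1+δ)/2 := by
        rw [hε₁]
        field_simp
        ring
      rw [heq]
      nlinarith [h1]
    exact le_of_mul_le_mul_left h2 (by positivity)
  have hmono₀ := ENNReal.toReal_mono (measure_ne_top (chiSq d) _)
    (measure_mono hsub₀)
  have hmono₁ := ENNReal.toReal_mono (measure_ne_top (chiSq d) _)
    (measure_mono hsub₁)
  have hneg : ((chiSq d) {x | k₁ * β * σ₁ ^ 2 * x + k₂ < b}).toReal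
      ≤ Real.exp (-d * (β - 1 - (1 + β) * δ) ^ 2 / (32 * β ^ 2)) := by
    refine le_trans hmono₁ (le_trans (chiSq_lower d hε₁pos hε₁le) (le_of_eq ?_))
    congr 1
    rw [hε₁]
    rw [div_pow]
    field_simp
    ring_nf
    try tauto
  unfold errSS
  by_cases hcase : (β - 3) / (β + 1) ≤ δ
  · rw [if_pos hcase]
    have hε₀le : ε₀ ≤ 1 := by
      rw [hε₀]
      have := (div_le_iff₀ hβ1).1 hcase
      linarith
    have hpos : ((chiSq d) {x | k₁ * σ₁ ^ 2 * x + k₂ ≥ b}).toReal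
        ≤ Real.exp (-d * (β - 1 - (1 + β) * δ) ^ 2 / 32) := by
      refine le_trans hmono₀ (le_trans (chiSq_upper_small d hε₀pos hε₀le) (le_of_eq ?_))
      congr 1
      rw [hε₀]
      ring
    exact add_le_add (mul_le_mul_of_nonneg_left hpos hpPos)
      (mul_le_mul_of_nonneg_left hneg hpNeg)
  · rw [if_neg hcase]
    push_neg at hcase
    have hε₀ge : 1 ≤ ε₀ := by
      rw [hε₀]
      have := (lt_div_iff₀ hβ1).1 hcase
      linarith
    have hpos : ((chiSq d) {x | k₁ * σ₁ ^ 2 * x + k₂ ≥ b}).toReal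
        ≤ Real.exp (-d * (β - 1 - (1 + β) * δ) / 16) := by
      refine le_trans hmono₀ (le_trans (chiSq_upper_big d hε₀ge) (le_of_eq ?_))
      congr 1
      rw [hε₀]
      ring
    exact add_le_add (mul_le_mul_of_nonneg_left hpos hpPos)
      (mul_le_mul_of_nonneg_left hneg hpNeg)

theorem self_supervised_classifier_error_bound
    {Ω : Type*} [MeasureSpace Ω] [IsProbabilityMeasure (ℙ : Measure Ω)]
    (d : ℕ) (hd : 1 ≤ d) (k₁ k₂ σ₁ β pPos : ℝ)
    (hk₁ : 0 < k₁) (hk₂ : 0 < k₂) (hσ : 0 < σ₁) (hβ : 3 < β)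
    (hpPos : 0 ≤ pPos) (hpNeg : 1 / 2 ≤ 1 - pPos)
    (Np Nm : ℕ) (hNp : 1 ≤ Np) (hNm : 1 ≤ Nm)
    (Zp : Fin Np → Ω → ℝ) (Zm : Fin Nm → Ω → ℝ)
    (hZp : ∀ i, Measure.map (fun ω => (Zp i ω - k₂) / (k₁ * σ₁ ^ 2)) ℙ = chiSq d)
    (hZm : ∀ i, Measure.map (fun ω => (Zm i ω - k₂) / (k₁ * β * σ₁ ^ 2)) ℙ = chiSq d)
    (hindep : iIndepFun
      (Sum.elim Zp Zm : Fin Np ⊕ Fin Nm → Ω → ℝ) ℙ)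
    (δ : ℝ) (hδ : 0 < δ) (hδ' : δ < (β - 1) / (β + 1)) :
    (ℙ {ω | errSS d k₁ k₂ σ₁ β pPos
              ((1 / 2) * ((∑ i, Zp i ω) / Np + (∑ j, Zm j ω) / Nm))
          ≤ (if (β - 3) / (β + 1) ≤ δ then
               pPos * Real.exp (-d * (β - 1 - (1 + β) * δ) ^ 2 / 32)
                 + (1 - pPos) * Real.exp (-d * (β - 1 - (1 + β) * δ) ^ 2 / (32 * β ^ 2))
             else
               pPos * Real.exp (-d * (β - 1 - (1 + β) * δ) / 16)
                 + (1 - pPos) * Real.exp (-d * (β - 1 - (1 + β) * δ) ^ 2 / (32 * β ^ 2)))}).toReal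
      ≥ 1 - 2 * Real.exp (-Nm * d * δ ^ 2 / 8) - 2 * Real.exp (-Np * d * δ ^ 2 / 8) := by
  have hβ0 : (0:ℝ) < β := by linarith
  have hβ1 : (0:ℝ) < β + 1 := by linarith
  have hδ1 : δ ≤ 1 := by
    have h2 : (β-1)/(β+1) < 1 := by rw [div_lt_one hβ1]; linarith
    linarith
  have ha : 0 < k₁ * σ₁^2 := by positivity
  have hc : 0 < k₁ * β * σ₁^2 := mul_pos (mul_pos hk₁ hβ0) (pow_pos hσ 2)
  have hane : k₁ * σ₁^2 ≠ 0 := ne_of_gt ha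
  have hcne : k₁ * β * σ₁^2 ≠ 0 := ne_of_gt hc
  -- measurable versions
  have hφp : ∀ i, AEMeasurable (fun ω => (Zp i ω - k₂)/(k₁ * σ₁ ^ 2)) ℙ := by
    intro i
    by_contra hcon
    have h := hZp i
    rw [Measure.map_of_not_aemeasurable hcon] at h
    exact (IsProbabilityMeasure.ne_zero (chiSq d)) h.symm
  have hφm : ∀ j, AEMeasurable (fun ω => (Zm j ω - k₂)/(k₁ * β * σ₁ ^ 2)) ℙ := by
    intro j
    by_contra hcon
    have h := hZm j
    rw [Measure.map_of_not_aemeasurable hcon] at h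
    exact (IsProbabilityMeasure.ne_zero (chiSq d)) h.symm
  set Wp : Fin Np → Ω → ℝ := fun i ω => (k₁ * σ₁ ^ 2) * (hφp i).mk _ ω + k₂ with hWpdef
  set Wm : Fin Nm → Ω → ℝ := fun j ω => (k₁ * β * σ₁ ^ 2) * (hφm j).mk _ ω + k₂ with hWmdef
  have hWpmeas : ∀ i, Measurable (Wp i) :=
    fun i => ((hφp i).measurable_mk.const_mul _).add_const _
  have hWmmeas : ∀ j, Measurable (Wm j) :=
    fun j => ((hφm j).measurable_mk.const_mul _).add_const _
  have hWpae : ∀ i, Zp i =ᵐ[ℙ] Wp i := by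
    intro i
    filter_upwards [(hφp i).ae_eq_mk] with ω hω
    rw [hWpdef]
    simp only
    rw [← hω]
    field_simp
    ring
  have hWmae : ∀ j, Zm j =ᵐ[ℙ] Wm j := by
    intro j
    filter_upwards [(hφm j).ae_eq_mk] with ω hω
    rw [hWmdef]
    simp only
    rw [← hω]
    field_simp
    ring
  have hWplaw : ∀ i, Measure.map (fun ω => (Wp i ω - k₂)/(k₁ * σ₁ ^ 2)) ℙ = chiSq d := by
    intro i
    have hfun : (fun ω => (Wp i ω - k₂)/(k₁ * σ₁ ^ 2)) = (hφp i).mk _ := by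
      funext ω
      rw [hWpdef]
      simp only
      field_simp
      ring
    rw [hfun, ← Measure.map_congr (hφp i).ae_eq_mk, hZp i]
  have hWmlaw : ∀ j, Measure.map (fun ω => (Wm j ω - k₂)/(k₁ * β * σ₁ ^ 2)) ℙ = chiSq d := by
    intro j
    have hfun : (fun ω => (Wm j ω - k₂)/(k₁ * β * σ₁ ^ 2)) = (hφm j).mk _ := by
      funext ω
      rw [hWmdef]
      simp only
      field_simp
      ring
    rw [hfun, ← Measure.map_congr (hφm j).ae_eq_mk, hZm j]
  -- independence
  have hindepW : iIndepFun (Sum.elim Wp Wm) ℙ := by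
    apply iIndepFun_ae_congr hindep
    intro i
    cases i with
    | inl j => exact hWpae j
    | inr j => exact hWmae j
  have hindWp : iIndepFun Wp ℙ :=
    iIndepFun_precomp hindepW Sum.inl Sum.inl_injective
  have hindWm : iIndepFun Wm ℙ :=
    iIndepFun_precomp hindepW Sum.inr Sum.inr_injective
  -- concentration bounds
  have hBp1 := conc_upper (μ := ℙ) ha hWpmeas hindWp hWplaw hδ hδ1
  have hBp2 := conc_lower (μ := ℙ) ha hWpmeas hindWp hWplaw hδ hδ1
  have hBm1 := conc_upper (μ := ℙ) hc hWmmeas hindWm hWmlaw hδ hδ1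
  have hBm2 := conc_lower (μ := ℙ) hc hWmmeas hindWm hWmlaw hδ hδ1
  set Bp1 : Set Ω := {ω | (Np:ℝ)*(k₂ + (k₁*σ₁^2)*(d:ℝ)*(1+δ)) ≤ ∑ i, Wp i ω} with hBp1def
  set Bp2 : Set Ω := {ω | ∑ i, Wp i ω ≤ (Np:ℝ)*(k₂ + (k₁*σ₁^2)*(d:ℝ)*(1-δ))} with hBp2def
  set Bm1 : Set Ω := {ω | (Nm:ℝ)*(k₂ + (k₁*β*σ₁^2)*(d:ℝ)*(1+δ)) ≤ ∑ j, Wm j ω} with hBm1def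
  set Bm2 : Set Ω := {ω | ∑ j, Wm j ω ≤ (Nm:ℝ)*(k₂ + (k₁*β*σ₁^2)*(d:ℝ)*(1-δ))} with hBm2def
  set Bad : Set Ω := (Bp1 ∪ Bp2) ∪ (Bm1 ∪ Bm2) with hBaddef
  have hSpmeas : Measurable (fun ω => ∑ i, Wp i ω) :=
    Finset.measurable_sum _ (fun i _ => hWpmeas i)
  have hSmmeas : Measurable (fun ω => ∑ j, Wm j ω) :=
    Finset.measurable_sum _ (fun j _ => hWmmeas j)
  have hBadmeas : MeasurableSet Bad := by
    apply MeasurableSet.union <;> apply MeasurableSet.union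
    · exact measurableSet_le measurable_const hSpmeas
    · exact measurableSet_le hSpmeas measurable_const
    · exact measurableSet_le measurable_const hSmmeas
    · exact measurableSet_le hSmmeas measurable_const
  set C : Set Ω := {ω | (∀ i, Zp i ω = Wp i ω) ∧ ∀ j, Zm j ω = Wm j ω} with hCdef
  have hCnull : ℙ Cᶜ = 0 := by
    have h1 : ∀ᵐ ω ∂ℙ, (∀ i, Zp i ω = Wp i ω) ∧ ∀ j, Zm j ω = Wm j ω := by
      refine Filter.Eventually.and ?_ ?_
      · rw [MeasureTheory.ae_all_iff]
        exact fun i => hWpae i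
      · rw [MeasureTheory.ae_all_iff]
        exact fun j => hWmae j
    exact h1
  have hNp0 : (0:ℝ) < (Np:ℝ) := by
    have : (1:ℝ) ≤ (Np:ℝ) := by exact_mod_cast hNp
    linarith
  have hNm0 : (0:ℝ) < (Nm:ℝ) := by
    have : (1:ℝ) ≤ (Nm:ℝ) := by exact_mod_cast hNm
    linarith
  -- inclusion into the target event
  have hsub : Badᶜ ∩ C ⊆ {ω | errSS d k₁ k₂ σ₁ β pPos
              ((1 / 2) * ((∑ i, Zp i ω) / Np + (∑ j, Zm j ω) / Nm))
          ≤ (if (β - 3) / (β + 1) ≤ δ then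
               pPos * Real.exp (-d * (β - 1 - (1 + β) * δ) ^ 2 / 32)
                 + (1 - pPos) * Real.exp (-d * (β - 1 - (1 + β) * δ) ^ 2 / (32 * β ^ 2))
             else
               pPos * Real.exp (-d * (β - 1 - (1 + β) * δ) / 16)
                 + (1 - pPos) * Real.exp (-d * (β - 1 - (1 + β) * δ) ^ 2 / (32 * β ^ 2)))} := by
    rintro ω ⟨hBad, hCmem⟩
    rw [hCdef] at hCmem
    obtain ⟨hZWp, hZWm⟩ := hCmem
    have hSp : (∑ i, Zp i ω) = ∑ i, Wp i ω := Finset.sum_congr rfl (fun i _ => hZWp i)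
    have hSm : (∑ j, Zm j ω) = ∑ j, Wm j ω := Finset.sum_congr rfl (fun j _ => hZWm j)
    rw [hBaddef] at hBad
    simp only [Set.mem_compl_iff, Set.mem_union, not_or, hBp1def, hBp2def, hBm1def, hBm2def,
      Set.mem_setOf_eq, not_le] at hBad
    obtain ⟨⟨h1, h2⟩, h3, h4⟩ := hBad
    have hx1 : (∑ i, Wp i ω) / (Np:ℝ) < k₂ + (k₁*σ₁^2)*(d:ℝ)*(1+δ) := by
      rw [div_lt_iff₀ hNp0]
      linarith [h1]
    have hx2 : k₂ + (k₁*σ₁^2)*(d:ℝ)*(1-δ) < (∑ i, Wp i ω) / (Np:ℝ) := by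
      rw [lt_div_iff₀ hNp0]
      linarith [h2]
    have hy1 : (∑ j, Wm j ω) / (Nm:ℝ) < k₂ + (k₁*β*σ₁^2)*(d:ℝ)*(1+δ) := by
      rw [div_lt_iff₀ hNm0]
      linarith [h3]
    have hy2 : k₂ + (k₁*β*σ₁^2)*(d:ℝ)*(1-δ) < (∑ j, Wm j ω) / (Nm:ℝ) := by
      rw [lt_div_iff₀ hNm0]
      linarith [h4]
    set b : ℝ := (1 / 2) * ((∑ i, Zp i ω) / Np + (∑ j, Zm j ω) / Nm) with hbdef
    have hbl : k₂ + (k₁*σ₁^2)*(d:ℝ)*(1+β)*(1-δ)/2 ≤ b := by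
      rw [hbdef, hSp, hSm]
      have hring : k₂ + (k₁*σ₁^2)*(d:ℝ)*(1+β)*(1-δ)/2
          = (1/2) * ((k₂ + (k₁*σ₁^2)*(d:ℝ)*(1-δ)) + (k₂ + (k₁*β*σ₁^2)*(d:ℝ)*(1-δ))) := by
        ring
      rw [hring]
      linarith [hx2, hy2]
    have hbu : b ≤ k₂ + (k₁*σ₁^2)*(d:ℝ)*(1+β)*(1+δ)/2 := by
      rw [hbdef, hSp, hSm]
      have hring : k₂ + (k₁*σ₁^2)*(d:ℝ)*(1+β)*(1+δ)/2
          = (1/2) * ((k₂ + (k₁*σ₁^2)*(d:ℝ)*(1+δ)) + (k₂ + (k₁*β*σ₁^2)*(d:ℝ)*(1+δ))) := by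
        ring
      rw [hring]
      linarith [hx1, hy1]
    exact errSS_le_bound d hk₁ hσ hβ hpPos (by linarith) hδ hδ' hbl hbu
  -- measure arithmetic
  have hmain : (ℙ (Badᶜ ∩ C)).toReal ≤ (ℙ {ω | errSS d k₁ k₂ σ₁ β pPos
              ((1 / 2) * ((∑ i, Zp i ω) / Np + (∑ j, Zm j ω) / Nm))
          ≤ (if (β - 3) / (β + 1) ≤ δ then
               pPos * Real.exp (-d * (β - 1 - (1 + β) * δ) ^ 2 / 32)
                 + (1 - pPos) * Real.exp (-d * (β - 1 - (1 + β) * δ) ^ 2 / (32 * β ^ 2))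
             else
               pPos * Real.exp (-d * (β - 1 - (1 + β) * δ) / 16)
                 + (1 - pPos) * Real.exp (-d * (β - 1 - (1 + β) * δ) ^ 2 / (32 * β ^ 2)))}).toReal :=
    ENNReal.toReal_mono (measure_ne_top _ _) (measure_mono hsub)
  have hCeq : ℙ (Badᶜ ∩ C) = ℙ Badᶜ := measure_inter_conull hCnull
  have hcompl : (ℙ Badᶜ).toReal = 1 - (ℙ Bad).toReal := by
    rw [prob_compl_eq_one_sub hBadmeas, ENNReal.toReal_sub_of_le prob_le_one ENNReal.one_ne_top,
      ENNReal.toReal_one]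
  have hunion : (ℙ Bad).toReal ≤ (ℙ Bp1).toReal + (ℙ Bp2).toReal
      + (ℙ Bm1).toReal + (ℙ Bm2).toReal := by
    have h1 : ℙ Bad ≤ ℙ Bp1 + ℙ Bp2 + (ℙ Bm1 + ℙ Bm2) := by
      refine le_trans (measure_union_le _ _) ?_
      exact add_le_add (measure_union_le _ _) (measure_union_le _ _)
    have h2 := ENNReal.toReal_mono (by finiteness) h1
    rw [ENNReal.toReal_add (by finiteness) (by finiteness),
      ENNReal.toReal_add (by finiteness) (by finiteness),
      ENNReal.toReal_add (by finiteness) (by finiteness)] at h2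
    linarith
  rw [ge_iff_le]
  calc 1 - 2 * Real.exp (-(Nm:ℝ) * (d:ℝ) * δ ^ 2 / 8) - 2 * Real.exp (-(Np:ℝ) * (d:ℝ) * δ ^ 2 / 8)
      ≤ 1 - ((ℙ Bp1).toReal + (ℙ Bp2).toReal + (ℙ Bm1).toReal + (ℙ Bm2).toReal) := by
        have e1 : (ℙ Bp1).toReal ≤ Real.exp (-(Np:ℝ) * (d:ℝ) * δ ^ 2 / 8) := hBp1
        have e2 : (ℙ Bp2).toReal ≤ Real.exp (-(Np:ℝ) * (d:ℝ) * δ ^ 2 / 8) := hBp2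
        have e3 : (ℙ Bm1).toReal ≤ Real.exp (-(Nm:ℝ) * (d:ℝ) * δ ^ 2 / 8) := hBm1
        have e4 : (ℙ Bm2).toReal ≤ Real.exp (-(Nm:ℝ) * (d:ℝ) * δ ^ 2 / 8) := hBm2
        linarith
    _ ≤ 1 - (ℙ Bad).toReal := by linarith
    _ = (ℙ Badᶜ).toReal := hcompl.symm
    _ = (ℙ (Badᶜ ∩ C)).toReal := by rw [hCeq]
    _ ≤ _ := hmain
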